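/- Let φ1, φ2 be q-positive unital linear functionals on unital *-algebras R1, R2 (i.e., φ_i(x* x) ≥ 0 for all x). Then their free product functional φ = φ1 ⋆ φ2 on the algebraic free product R1 ⋆ R2 (amalgamated over ℂ), defined by φ(1) = 1 and φ(p_{i_1} ··· p_{i_n}) = φ_{i_1}(p_{i_1}) ··· φ_{i_n}(p_{i_n}) for alternating i_1 ≠ i_2, ..., i_{n−1} ≠ i_n and p_{i_k} in the augmentation-kernel of R_{i_k} (i.e., φ_{i_k}(p_{i_k}) can be arranged to vanish after centering), satisfies φ(x* x) ≥ 0 for all x ∈ R1 ⋆ R2. -/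

import Mathlib

set_option linter.unusedSectionVars false
set_option linter.unreachableTactic false
set_option linter.unusedTactic false
open scoped ComplexOrder

namespace Stmt17Aux

open Complex

noncomputable section

/-! ### Generic facts about q-positive functionals -/

/-- A unital q-positive functional is star-compatible. -/
lemma star_apply_conj {A : Type*} [Ring A] [Algebra ℂ A] [StarRing A] [StarModule ℂ A]
    (φ : A →ₗ[ℂ] ℂ) (hu : φ 1 = 1) (hq : ∀ x : A, 0 ≤ φ (star x * x)) (x : A) :
    φ (star x) = starRingEnd ℂ (φ x) := by
  have key : ∀ y : A, (φ (star y * y)).im = 0 := by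
    intro y
    have h := hq y
    rw [Complex.le_def] at h
    simpa using h.2.symm
  have e1 : star (x + 1) * (x + 1) = star x * x + (star x + x + 1) := by
    simp only [star_add, star_one, add_mul, mul_add, one_mul, mul_one]
    abel
  have e2 : star (x + (Complex.I • 1 : A)) * (x + (Complex.I • 1 : A))
      = star x * x + (Complex.I • star x - Complex.I • x + 1) := by
    have hstar : star ((Complex.I • 1 : A)) = (-Complex.I) • (1 : A) := by
      rw [star_smul, star_one]
      simp [Complex.conj_I]
    rw [star_add, hstar]
    simp only [add_mul, mul_add, smul_mul_assoc, mul_smul_comm, one_mul, mul_one, smul_add,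
      smul_smul, neg_mul, mul_neg, Complex.I_mul_I, neg_neg, one_smul, neg_smul, smul_neg]
    abel
  have h1 := key (x + 1)
  have h2 := key (x + (Complex.I • 1 : A))
  rw [e1] at h1
  rw [e2] at h2
  simp only [map_add, map_sub, map_smul, map_one, hu, Complex.add_im, key x,
    Complex.sub_im, Complex.smul_im, Complex.one_im, smul_eq_mul, Complex.mul_im,
    Complex.I_re, Complex.I_im] at h1 h2
  apply Complex.ext
  · simp only [Complex.conj_re]
    nlinarith [h2]
  · simp only [Complex.conj_im]
    nlinarith [h1]

/-! ### Matrix positivity helpers -/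

section
open Matrix

lemma quad_eq {m : ℕ} (M : Matrix (Fin m) (Fin m) ℂ) (x : Fin m → ℂ) :
    dotProduct (star x) (M *ᵥ x)
      = ∑ j, ∑ k, starRingEnd ℂ (x j) * x k * M j k := by
  simp only [dotProduct, Matrix.mulVec, dotProduct, Pi.star_apply, Finset.mul_sum,
    RCLike.star_def]
  refine Finset.sum_congr rfl fun j _ => Finset.sum_congr rfl fun k _ => by ring

lemma psd_add {m : ℕ} {A B : Matrix (Fin m) (Fin m) ℂ}
    (hA : A.PosSemidef) (hB : B.PosSemidef) : (A + B).PosSemidef := by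
  rw [Matrix.posSemidef_iff_dotProduct_mulVec]
  refine ⟨hA.1.add hB.1, fun x => ?_⟩
  rw [Matrix.add_mulVec, dotProduct_add]
  exact add_nonneg (hA.dotProduct_mulVec_nonneg x) (hB.dotProduct_mulVec_nonneg x)

lemma rankone_psd {m : ℕ} (v : Fin m → ℂ) :
    Matrix.PosSemidef (Matrix.of fun j k => starRingEnd ℂ (v j) * v k) := by
  rw [Matrix.posSemidef_iff_dotProduct_mulVec]
  constructor
  · ext j k
    simp only [Matrix.conjTranspose_apply, Matrix.of_apply, star_mul', RCLike.star_def,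
      Complex.conj_conj]
    ring
  · intro x
    rw [quad_eq]
    have hs : (∑ j, ∑ k, starRingEnd ℂ (x j) * x k * ((Matrix.of fun j k =>
        starRingEnd ℂ (v j) * v k) j k))
        = star (∑ k, v k * x k) * (∑ k, v k * x k) := by
      rw [Complex.star_def, map_sum, Finset.sum_mul_sum]
      refine Finset.sum_congr rfl fun j _ => Finset.sum_congr rfl fun k _ => ?_
      simp only [Matrix.of_apply, _root_.map_mul]
      ring
    rw [hs]
    exact star_mul_self_nonneg _

lemma hadamard_psd {m : ℕ} {A B : Matrix (Fin m) (Fin m) ℂ}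
    (hA : A.PosSemidef) (hB : B.PosSemidef) :
    Matrix.PosSemidef (Matrix.of fun j k => A j k * B j k) := by
  obtain ⟨p, v, hv⟩ := Matrix.posSemidef_iff_eq_sum_vecMulVec.mp hA
  obtain ⟨C, hAentry⟩ : ∃ C : Fin p → Fin m → ℂ,
      ∀ j k, A j k = ∑ r, starRingEnd ℂ (C r j) * C r k := by
    refine ⟨fun r j => star (v r j), fun j k => ?_⟩
    rw [hv, Matrix.sum_apply]
    refine Finset.sum_congr rfl fun r _ => ?_
    simp [Matrix.vecMulVec_apply, Complex.star_def]
  rw [Matrix.posSemidef_iff_dotProduct_mulVec]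
  constructor
  · ext j k
    simp only [Matrix.conjTranspose_apply, Matrix.of_apply, star_mul']
    rw [hA.1.apply, hB.1.apply]
  · intro x
    rw [quad_eq]
    have key : (∑ j, ∑ k, starRingEnd ℂ (x j) * x k * ((Matrix.of fun j k =>
          A j k * B j k) j k))
        = ∑ r, dotProduct (star fun k => x k * C r k) (B *ᵥ fun k => x k * C r k) := by
      have hrhs : ∀ r, dotProduct (star fun k => x k * C r k) (B *ᵥ fun k => x k * C r k)
          = ∑ j, ∑ k, starRingEnd ℂ (x j) * x k *
              (starRingEnd ℂ (C r j) * C r k * B j k) := by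
        intro r
        rw [quad_eq]
        refine Finset.sum_congr rfl fun j _ => Finset.sum_congr rfl fun k _ => ?_
        simp only [_root_.map_mul, Pi.star_apply, Complex.star_def]
        ring
      calc (∑ j, ∑ k, starRingEnd ℂ (x j) * x k * ((Matrix.of fun j k =>
              A j k * B j k) j k))
          = ∑ j, ∑ k, ∑ r, starRingEnd ℂ (x j) * x k *
              (starRingEnd ℂ (C r j) * C r k * B j k) := by
            refine Finset.sum_congr rfl fun j _ => Finset.sum_congr rfl fun k _ => ?_
            simp only [Matrix.of_apply, hAentry, Finset.sum_mul, Finset.mul_sum]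
            all_goals exact Finset.sum_congr rfl fun r _ => by ring
        _ = ∑ j, ∑ r, ∑ k, starRingEnd ℂ (x j) * x k *
              (starRingEnd ℂ (C r j) * C r k * B j k) :=
            Finset.sum_congr rfl fun j _ => Finset.sum_comm
        _ = ∑ r, ∑ j, ∑ k, starRingEnd ℂ (x j) * x k *
              (starRingEnd ℂ (C r j) * C r k * B j k) := Finset.sum_comm
        _ = ∑ r, dotProduct (star fun k => x k * C r k) (B *ᵥ fun k => x k * C r k) := by
            refine Finset.sum_congr rfl fun r _ => (hrhs r).symm
    rw [key]
    exact Finset.sum_nonneg fun r _ => hB.dotProduct_mulVec_nonneg _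

/-- Gram matrices of a q-positive functional are positive semidefinite. -/
lemma gram_psd {A : Type*} [Ring A] [Algebra ℂ A] [StarRing A] [StarModule ℂ A]
    (ψ : A →ₗ[ℂ] ℂ) (hq : ∀ x : A, 0 ≤ ψ (star x * x))
    (hconj : ∀ x : A, ψ (star x) = starRingEnd ℂ (ψ x))
    {m : ℕ} (a : Fin m → A) :
    Matrix.PosSemidef (Matrix.of fun j k => ψ (star (a j) * a k)) := by
  rw [Matrix.posSemidef_iff_dotProduct_mulVec]
  constructor
  · ext j k
    simp only [Matrix.conjTranspose_apply, Matrix.of_apply, Complex.star_def]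
    rw [← hconj, StarMul.star_mul, star_star]
  · intro x
    rw [quad_eq]
    have hs : ψ (star (∑ k, x k • a k) * (∑ k, x k • a k))
        = ∑ j, ∑ k, starRingEnd ℂ (x j) * x k * ((Matrix.of fun j k =>
            ψ (star (a j) * a k)) j k) := by
      rw [star_sum]
      simp only [star_smul, Complex.star_def]
      rw [Finset.sum_mul_sum]
      rw [map_sum]
      refine Finset.sum_congr rfl fun j _ => ?_
      rw [map_sum]
      refine Finset.sum_congr rfl fun k _ => ?_
      rw [smul_mul_assoc, mul_smul_comm, LinearMap.map_smul, LinearMap.map_smul]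
      simp only [Matrix.of_apply, smul_eq_mul]
      ring
    rw [← hs]
    exact hq _

end

/-! ### Words in the free product -/

variable {R₁ R₂ R : Type*}
    [Ring R₁] [Algebra ℂ R₁] [StarRing R₁] [StarModule ℂ R₁]
    [Ring R₂] [Algebra ℂ R₂] [StarRing R₂] [StarModule ℂ R₂]
    [Ring R] [Algebra ℂ R] [StarRing R] [StarModule ℂ R]

variable (φ₁ : R₁ →ₗ[ℂ] ℂ) (φ₂ : R₂ →ₗ[ℂ] ℂ) (ι₁ : R₁ →⋆ₐ[ℂ] R) (ι₂ : R₂ →⋆ₐ[ℂ] R)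

def emb : R₁ ⊕ R₂ → R := Sum.elim ι₁ ι₂

def Cent : R₁ ⊕ R₂ → Prop := Sum.elim (fun y => φ₁ y = 0) (fun y => φ₂ y = 0)

/-- Alternating words of centered letters. -/
def AltW (l : List (R₁ ⊕ R₂)) : Prop :=
  l.Chain' (fun a b => a.isLeft ≠ b.isLeft) ∧ ∀ x ∈ l, Cent φ₁ φ₂ x

def prodE (l : List (R₁ ⊕ R₂)) : R := (l.map (emb ι₁ ι₂)).prod

def starS : R₁ ⊕ R₂ → R₁ ⊕ R₂ := Sum.map star star

def revstar (l : List (R₁ ⊕ R₂)) : List (R₁ ⊕ R₂) := (l.map starS).reverse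

@[simp] lemma isLeft_starS (x : R₁ ⊕ R₂) : (starS x).isLeft = x.isLeft := by
  cases x <;> rfl

@[simp] lemma emb_inl (y : R₁) : emb ι₁ ι₂ (Sum.inl y) = ι₁ y := rfl
@[simp] lemma emb_inr (y : R₂) : emb ι₁ ι₂ (Sum.inr y) = ι₂ y := rfl

@[simp] lemma star_emb (x : R₁ ⊕ R₂) :
    star (emb ι₁ ι₂ x) = emb ι₁ ι₂ (starS x) := by
  cases x <;> simp [starS, map_star]

@[simp] lemma prodE_nil : prodE ι₁ ι₂ ([] : List (R₁ ⊕ R₂)) = 1 := rfl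

@[simp] lemma prodE_cons (x : R₁ ⊕ R₂) (l : List (R₁ ⊕ R₂)) :
    prodE ι₁ ι₂ (x :: l) = emb ι₁ ι₂ x * prodE ι₁ ι₂ l := by
  simp [prodE]

lemma prodE_append (l l' : List (R₁ ⊕ R₂)) :
    prodE ι₁ ι₂ (l ++ l') = prodE ι₁ ι₂ l * prodE ι₁ ι₂ l' := by
  simp [prodE]

lemma revstar_cons (x : R₁ ⊕ R₂) (l : List (R₁ ⊕ R₂)) :
    revstar (x :: l) = revstar l ++ [starS x] := by
  simp [revstar]

lemma star_prodE (l : List (R₁ ⊕ R₂)) :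
    star (prodE ι₁ ι₂ l) = prodE ι₁ ι₂ (revstar l) := by
  induction l with
  | nil => simp [revstar]
  | cons x t ih =>
      rw [prodE_cons, star_mul, ih, revstar_cons, prodE_append]
      simp

lemma AltW_tail {l : List (R₁ ⊕ R₂)} (h : AltW φ₁ φ₂ l) : AltW φ₁ φ₂ l.tail :=
  ⟨h.1.tail, fun x hx => h.2 x (List.mem_of_mem_tail hx)⟩

lemma AltW_revstar
    (hconj₁ : ∀ y : R₁, φ₁ (star y) = starRingEnd ℂ (φ₁ y))
    (hconj₂ : ∀ y : R₂, φ₂ (star y) = starRingEnd ℂ (φ₂ y))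
    {l : List (R₁ ⊕ R₂)} (h : AltW φ₁ φ₂ l) : AltW φ₁ φ₂ (revstar l) := by
  constructor
  · rw [revstar]
    unfold List.Chain'
    rw [List.isChain_reverse, List.isChain_map]
    refine h.1.imp fun a b hab => ?_
    simp only [flip, isLeft_starS]
    exact hab.symm
  · intro x hx
    rw [revstar, List.mem_reverse, List.mem_map] at hx
    obtain ⟨u, hu, rfl⟩ := hx
    have hc := h.2 u hu
    cases u with
    | inl y =>
        simp only [Cent, starS, Sum.map_inl, Sum.elim_inl] at hc ⊢
        rw [hconj₁, hc, map_zero]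
    | inr y =>
        simp only [Cent, starS, Sum.map_inr, Sum.elim_inr] at hc ⊢
        rw [hconj₂, hc, map_zero]

/-! ### Head/emptiness extraction -/

def hd1 : List (R₁ ⊕ R₂) → R₁
  | (Sum.inl y) :: _ => y
  | _ => 0

def hd2 : List (R₁ ⊕ R₂) → R₂
  | (Sum.inr y) :: _ => y
  | _ => 0

def ec : List (R₁ ⊕ R₂) → ℂ
  | [] => 1
  | _ => 0

@[simp] lemma hd1_nil : hd1 ([] : List (R₁ ⊕ R₂)) = 0 := rfl
@[simp] lemma hd1_consl (y : R₁) (t : List (R₁ ⊕ R₂)) : hd1 (Sum.inl y :: t) = y := rfl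
@[simp] lemma hd1_consr (y : R₂) (t : List (R₁ ⊕ R₂)) : hd1 (Sum.inr y :: t) = 0 := rfl
@[simp] lemma hd2_nil : hd2 ([] : List (R₁ ⊕ R₂)) = 0 := rfl
@[simp] lemma hd2_consl (y : R₁) (t : List (R₁ ⊕ R₂)) : hd2 (Sum.inl y :: t) = 0 := rfl
@[simp] lemma hd2_consr (y : R₂) (t : List (R₁ ⊕ R₂)) : hd2 (Sum.inr y :: t) = y := rfl
@[simp] lemma ec_nil : ec ([] : List (R₁ ⊕ R₂)) = 1 := rfl
@[simp] lemma ec_cons (x : R₁ ⊕ R₂) (t : List (R₁ ⊕ R₂)) : ec (x :: t) = 0 := rfl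

@[simp] lemma conj_ec (l : List (R₁ ⊕ R₂)) : starRingEnd ℂ (ec l) = ec l := by
  cases l <;> simp


/-! ### Vanishing on alternating words -/

section
variable (φ : R →ₗ[ℂ] ℂ)
variable (hfree : ∀ (L : List R) (c : List Bool) (hlen : L.length = c.length),
      c.Chain' (· ≠ ·) →
      (∀ i : Fin L.length,
        if c.get (Fin.cast hlen i) then ∃ y : R₁, ι₁ y = L.get i ∧ φ₁ y = 0
        else ∃ y : R₂, ι₂ y = L.get i ∧ φ₂ y = 0) →
      L ≠ [] → φ L.prod = 0)

include hfree

lemma word_zero {l : List (R₁ ⊕ R₂)} (hw : AltW φ₁ φ₂ l) (hne : l ≠ []) :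
    φ (prodE ι₁ ι₂ l) = 0 := by
  show φ ((l.map (emb ι₁ ι₂)).prod) = 0
  have hlen : (l.map (emb ι₁ ι₂)).length = (l.map Sum.isLeft).length := by simp
  refine hfree (l.map (emb ι₁ ι₂)) (l.map Sum.isLeft) hlen ?_ ?_ (by simpa using hne)
  · exact (List.isChain_map _).mpr hw.1
  · intro i
    have hi : (i : ℕ) < l.length := by simpa using i.2
    have h1 : (l.map (emb ι₁ ι₂)).get i = emb ι₁ ι₂ (l[(i : ℕ)]) := by
      simp [List.get_eq_getElem]
    have h2 : (l.map Sum.isLeft).get (Fin.cast hlen i) = (l[(i : ℕ)]).isLeft := by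
      simp [List.get_eq_getElem]
    rw [h1, h2]
    have hc := hw.2 (l[(i : ℕ)]) (List.getElem_mem hi)
    rcases hx : l[(i : ℕ)] with y | y
    · rw [hx] at hc
      simp only [Sum.isLeft_inl, if_true]
      exact ⟨y, rfl, hc⟩
    · rw [hx] at hc
      simp only [Sum.isLeft_inr, Bool.false_eq_true, if_false]
      exact ⟨y, rfl, hc⟩

/-- The key recursion formula for the free product state on pairs of words. -/
lemma entry
    (hconj₁ : ∀ y : R₁, φ₁ (star y) = starRingEnd ℂ (φ₁ y))
    (hconj₂ : ∀ y : R₂, φ₂ (star y) = starRingEnd ℂ (φ₂ y))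
    (hφ₁u : φ₁ 1 = 1) (hφ₂u : φ₂ 1 = 1) (hφu : φ 1 = 1)
    (l l' : List (R₁ ⊕ R₂)) (h : AltW φ₁ φ₂ l) (h' : AltW φ₁ φ₂ l') :
    φ (star (prodE ι₁ ι₂ l) * prodE ι₁ ι₂ l') =
      ec l * ec l'
      + φ₁ (star (hd1 l) * hd1 l') * φ (star (prodE ι₁ ι₂ l.tail) * prodE ι₁ ι₂ l'.tail)
      + φ₂ (star (hd2 l) * hd2 l') * φ (star (prodE ι₁ ι₂ l.tail) * prodE ι₁ ι₂ l'.tail) := by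
  have wz := fun {m : List (R₁ ⊕ R₂)} (hm : AltW φ₁ φ₂ m) (hne : m ≠ []) =>
    word_zero φ₁ φ₂ ι₁ ι₂ φ hfree hm hne
  rcases l with _ | ⟨x, t⟩
  · rcases l' with _ | ⟨x', t'⟩
    · simp [hφu]
    · have h0 : φ (star (prodE ι₁ ι₂ ([] : List (R₁ ⊕ R₂))) * prodE ι₁ ι₂ (x' :: t')) = 0 := by
        rw [prodE_nil, star_one, one_mul]
        exact wz h' (by simp)
      rw [h0]
      simp
  · rcases l' with _ | ⟨x', t'⟩
    · have h0 : φ (star (prodE ι₁ ι₂ (x :: t)) * prodE ι₁ ι₂ ([] : List (R₁ ⊕ R₂))) = 0 := by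
        rw [prodE_nil, mul_one, star_prodE]
        exact wz (AltW_revstar _ _ hconj₁ hconj₂ h) (by simp [revstar])
      rw [h0]
      simp
    · -- both nonempty
      have hrev : AltW φ₁ φ₂ (revstar (x :: t)) := AltW_revstar _ _ hconj₁ hconj₂ h
      -- cross-type vanishing
      have hcross : x.isLeft ≠ x'.isLeft →
          φ (star (prodE ι₁ ι₂ (x :: t)) * prodE ι₁ ι₂ (x' :: t')) = 0 := by
        intro hxx
        rw [star_prodE, ← prodE_append]
        refine wz ⟨?_, ?_⟩ (by simp)
        · unfold List.Chain'; rw [List.isChain_append]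
          refine ⟨hrev.1, h'.1, ?_⟩
          intro a ha b hb
          simp only [List.head?_cons, Option.mem_def, Option.some.injEq] at hb
          subst hb
          rw [revstar, List.getLast?_eq_head?_reverse, List.reverse_reverse] at ha
          simp only [List.map_cons, List.head?_cons, Option.mem_def, Option.some.injEq] at ha
          subst ha
          simpa using hxx
        · intro u hu
          rcases List.mem_append.mp hu with hu | hu
          · exact hrev.2 u hu
          · exact h'.2 u hu
      rcases x with y | y <;> rcases x' with y' | y'
      · -- inl, inl : the main splitting
        set c : ℂ := φ₁ (star y * y') with hc
        set z : R₁ := star y * y' - c • (1 : R₁) with hz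
        have hzc : φ₁ z = 0 := by
          rw [hz, map_sub, LinearMap.map_smul, hφ₁u]
          simp [hc]
        have hsplit : (ι₁ (star y) : R) * ι₁ y' = c • (1 : R) + ι₁ z := by
          rw [← map_mul]
          have hzz : (ι₁ z : R) = ι₁ (star y * y') - c • 1 := by
            rw [hz, map_sub, map_smul, map_one]
          rw [hzz]
          abel
        have key : star (prodE ι₁ ι₂ (Sum.inl y :: t)) * prodE ι₁ ι₂ (Sum.inl y' :: t')
            = c • (prodE ι₁ ι₂ (revstar t) * prodE ι₁ ι₂ t')
              + prodE ι₁ ι₂ (revstar t ++ (Sum.inl z :: t')) := by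
          rw [star_prodE]
          simp only [revstar_cons, prodE_append, prodE_cons, prodE_nil, starS,
            Sum.map_inl, emb_inl, mul_one]
          rw [mul_assoc, ← mul_assoc (ι₁ (star y) : R), hsplit, add_mul, smul_mul_assoc,
            one_mul, mul_add, mul_smul_comm]
        have hword : AltW φ₁ φ₂ (revstar t ++ (Sum.inl z :: t')) := by
          have ht : AltW φ₁ φ₂ t := AltW_tail _ _ h
          have hrt := AltW_revstar _ _ hconj₁ hconj₂ ht
          constructor
          · unfold List.Chain'; rw [List.isChain_append]
            refine ⟨hrt.1, ?_, ?_⟩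
            · rw [List.isChain_cons]
              refine ⟨?_, h'.1.tail⟩
              intro b hb
              have := (List.isChain_cons.mp h'.1).1 b hb
              simpa using this
            · intro a ha b hb
              simp only [List.head?_cons, Option.mem_def, Option.some.injEq] at hb
              subst hb
              rw [revstar, List.getLast?_eq_head?_reverse, List.reverse_reverse] at ha
              rcases t with _ | ⟨u, t₂⟩
              · simp at ha
              · simp only [List.map_cons, List.head?_cons, Option.mem_def,
                  Option.some.injEq] at ha
                subst ha
                have := (List.isChain_cons.mp h.1).1 u (by simp)
                simpa using this
          · intro u hu
            rcases List.mem_append.mp hu with hu | hu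
            · exact hrt.2 u hu
            · rcases List.mem_cons.mp hu with rfl | hu
              · simpa [Cent] using hzc
              · exact h'.2 u (List.mem_cons_of_mem _ hu)
        rw [key, map_add, LinearMap.map_smul, wz hword (by simp), ← star_prodE]
        simp only [List.tail_cons, hd1_consl, hd2_consl, ec_cons, smul_eq_mul]
        rw [← hc]
        simp
      · exact (hcross (by simp)).symm ▸ (by simp)
      · exact (hcross (by simp)).symm ▸ (by simp)
      · -- inr, inr : symmetric splitting
        set c : ℂ := φ₂ (star y * y') with hc
        set z : R₂ := star y * y' - c • (1 : R₂) with hz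
        have hzc : φ₂ z = 0 := by
          rw [hz, map_sub, LinearMap.map_smul, hφ₂u]
          simp [hc]
        have hsplit : (ι₂ (star y) : R) * ι₂ y' = c • (1 : R) + ι₂ z := by
          rw [← map_mul]
          have hzz : (ι₂ z : R) = ι₂ (star y * y') - c • 1 := by
            rw [hz, map_sub, map_smul, map_one]
          rw [hzz]
          abel
        have key : star (prodE ι₁ ι₂ (Sum.inr y :: t)) * prodE ι₁ ι₂ (Sum.inr y' :: t')
            = c • (prodE ι₁ ι₂ (revstar t) * prodE ι₁ ι₂ t')
              + prodE ι₁ ι₂ (revstar t ++ (Sum.inr z :: t')) := by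
          rw [star_prodE]
          simp only [revstar_cons, prodE_append, prodE_cons, prodE_nil, starS,
            Sum.map_inr, emb_inr, mul_one]
          rw [mul_assoc, ← mul_assoc (ι₂ (star y) : R), hsplit, add_mul, smul_mul_assoc,
            one_mul, mul_add, mul_smul_comm]
        have hword : AltW φ₁ φ₂ (revstar t ++ (Sum.inr z :: t')) := by
          have ht : AltW φ₁ φ₂ t := AltW_tail _ _ h
          have hrt := AltW_revstar _ _ hconj₁ hconj₂ ht
          constructor
          · unfold List.Chain'; rw [List.isChain_append]
            refine ⟨hrt.1, ?_, ?_⟩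
            · rw [List.isChain_cons]
              refine ⟨?_, h'.1.tail⟩
              intro b hb
              have := (List.isChain_cons.mp h'.1).1 b hb
              simpa using this
            · intro a ha b hb
              simp only [List.head?_cons, Option.mem_def, Option.some.injEq] at hb
              subst hb
              rw [revstar, List.getLast?_eq_head?_reverse, List.reverse_reverse] at ha
              rcases t with _ | ⟨u, t₂⟩
              · simp at ha
              · simp only [List.map_cons, List.head?_cons, Option.mem_def,
                  Option.some.injEq] at ha
                subst ha
                have := (List.isChain_cons.mp h.1).1 u (by simp)
                simpa using this
          · intro u hu
            rcases List.mem_append.mp hu with hu | hu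
            · exact hrt.2 u hu
            · rcases List.mem_cons.mp hu with rfl | hu
              · simpa [Cent] using hzc
              · exact h'.2 u (List.mem_cons_of_mem _ hu)
        rw [key, map_add, LinearMap.map_smul, wz hword (by simp), ← star_prodE]
        simp only [List.tail_cons, hd1_consr, hd2_consr, ec_cons, smul_eq_mul]
        rw [← hc]
        simp

/-- The Gram matrix of a family of words is positive semidefinite. -/
lemma main_psd
    (hconj₁ : ∀ y : R₁, φ₁ (star y) = starRingEnd ℂ (φ₁ y))
    (hconj₂ : ∀ y : R₂, φ₂ (star y) = starRingEnd ℂ (φ₂ y))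
    (hφ₁u : φ₁ 1 = 1) (hφ₂u : φ₂ 1 = 1)
    (hφ₁q : ∀ x : R₁, 0 ≤ φ₁ (star x * x)) (hφ₂q : ∀ x : R₂, 0 ≤ φ₂ (star x * x))
    (hφu : φ 1 = 1) :
    ∀ (n : ℕ) {m : ℕ} (w : Fin m → List (R₁ ⊕ R₂)),
      (∀ j, AltW φ₁ φ₂ (w j)) → (∀ j, (w j).length ≤ n) →
      Matrix.PosSemidef (Matrix.of fun j k =>
        φ (star (prodE ι₁ ι₂ (w j)) * prodE ι₁ ι₂ (w k))) := by
  intro n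
  induction n with
  | zero =>
      intro m w hw hlen
      have hnil : ∀ j, w j = [] := fun j => List.length_eq_zero_iff.mp (Nat.le_zero.mp (hlen j))
      have hE : (Matrix.of fun j k => φ (star (prodE ι₁ ι₂ (w j)) * prodE ι₁ ι₂ (w k)))
          = Matrix.of fun j k =>
              starRingEnd ℂ ((fun _ : Fin m => (1 : ℂ)) j) * (fun _ : Fin m => (1 : ℂ)) k := by
        ext j k
        simp [hnil, hφu]
      rw [hE]
      exact rankone_psd _
  | succ n ih =>
      intro m w hw hlen
      have hN := ih (fun j => (w j).tail) (fun j => AltW_tail _ _ (hw j))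
        (fun j => by
          show ((w j).tail).length ≤ n
          have := hlen j
          rw [List.length_tail]
          omega)
      have hG1 := gram_psd φ₁ hφ₁q hconj₁ (fun j => hd1 (w j))
      have hG2 := gram_psd φ₂ hφ₂q hconj₂ (fun j => hd2 (w j))
      have hE := rankone_psd (fun j => ec (w j))
      have hM : (Matrix.of fun j k => φ (star (prodE ι₁ ι₂ (w j)) * prodE ι₁ ι₂ (w k)))
          = (Matrix.of fun j k =>
                starRingEnd ℂ ((fun j => ec (w j)) j) * (fun j => ec (w j)) k)
            + ((Matrix.of fun j k =>
                  (Matrix.of fun j k => φ₁ (star (hd1 (w j)) * hd1 (w k))) j k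
                  * (Matrix.of fun j k =>
                      φ (star (prodE ι₁ ι₂ (w j).tail) * prodE ι₁ ι₂ (w k).tail)) j k)
              + (Matrix.of fun j k =>
                  (Matrix.of fun j k => φ₂ (star (hd2 (w j)) * hd2 (w k))) j k
                  * (Matrix.of fun j k =>
                      φ (star (prodE ι₁ ι₂ (w j).tail) * prodE ι₁ ι₂ (w k).tail)) j k)) := by
        ext j k
        simp only [Matrix.add_apply, Matrix.of_apply, conj_ec]
        rw [entry φ₁ φ₂ ι₁ ι₂ φ hfree hconj₁ hconj₂ hφ₁u hφ₂u hφu (w j) (w k) (hw j) (hw k)]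
        ring
      rw [hM]
      exact psd_add hE (psd_add (hadamard_psd hG1 hN) (hadamard_psd hG2 hN))

end

/-! ### The span of words is everything -/

def WordSet : Set R := {x | ∃ l : List (R₁ ⊕ R₂), AltW φ₁ φ₂ l ∧ prodE ι₁ ι₂ l = x}

lemma span_words (hφ₁u : φ₁ 1 = 1) (hφ₂u : φ₂ 1 = 1)
    (hgen : Algebra.adjoin ℂ (Set.range ι₁ ∪ Set.range ι₂) = ⊤) (x : R) :
    x ∈ Submodule.span ℂ (WordSet φ₁ φ₂ ι₁ ι₂) := by
  set W := Submodule.span ℂ (WordSet φ₁ φ₂ ι₁ ι₂) with hWdef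
  have hword_mem : ∀ l : List (R₁ ⊕ R₂), AltW φ₁ φ₂ l → prodE ι₁ ι₂ l ∈ W :=
    fun l hl => Submodule.subset_span ⟨l, hl, rfl⟩
  have hone : (1 : R) ∈ W := hword_mem [] ⟨List.isChain_nil, by simp⟩
  -- centered left multiplication
  have hcent₁ : ∀ y₀ : R₁, φ₁ y₀ = 0 → ∀ l : List (R₁ ⊕ R₂), AltW φ₁ φ₂ l →
      ι₁ y₀ * prodE ι₁ ι₂ l ∈ W := by
    intro y₀ hy₀ l hl
    rcases l with _ | ⟨x, t⟩
    · have := hword_mem [Sum.inl y₀] ⟨List.isChain_singleton _, by simp [Cent, hy₀]⟩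
      simpa using this
    · rcases x with z | z
      · -- merge the two left letters
        set c : ℂ := φ₁ (y₀ * z) with hc
        set z' : R₁ := y₀ * z - c • (1 : R₁) with hz'
        have hz'c : φ₁ z' = 0 := by
          rw [hz', map_sub, LinearMap.map_smul, hφ₁u]
          simp [hc]
        have ht : AltW φ₁ φ₂ t := AltW_tail _ _ hl
        have hkey : ι₁ y₀ * prodE ι₁ ι₂ (Sum.inl z :: t)
            = c • prodE ι₁ ι₂ t + prodE ι₁ ι₂ (Sum.inl z' :: t) := by
          rw [prodE_cons, prodE_cons, emb_inl, ← mul_assoc, ← map_mul]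
          have hzz : (ι₁ z' : R) = ι₁ (y₀ * z) - c • 1 := by
            rw [hz', map_sub, map_smul, map_one]
          have hsplit : (ι₁ (y₀ * z) : R) = c • (1 : R) + ι₁ z' := by
            rw [hzz]; abel
          rw [hsplit, add_mul, smul_mul_assoc, one_mul]
          rfl
        rw [hkey]
        refine W.add_mem (W.smul_mem _ (hword_mem t ht)) (hword_mem _ ⟨?_, ?_⟩)
        · unfold List.Chain'; rw [List.isChain_cons]
          refine ⟨?_, hl.1.tail⟩
          intro b hb
          have := (List.isChain_cons.mp hl.1).1 b hb
          simpa using this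
        · intro u hu
          rcases List.mem_cons.mp hu with rfl | hu
          · simpa [Cent] using hz'c
          · exact hl.2 u (List.mem_cons_of_mem _ hu)
      · -- prepend a new left letter
        have hkey : ι₁ y₀ * prodE ι₁ ι₂ (Sum.inr z :: t)
            = prodE ι₁ ι₂ (Sum.inl y₀ :: Sum.inr z :: t) := by
          simp [prodE_cons]
        rw [hkey]
        refine hword_mem _ ⟨?_, ?_⟩
        · unfold List.Chain'; rw [List.isChain_cons]
          refine ⟨?_, hl.1⟩
          intro b hb
          simp only [List.head?_cons, Option.mem_def, Option.some.injEq] at hb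
          subst hb
          simp
        · intro u hu
          rcases List.mem_cons.mp hu with rfl | hu
          · simpa [Cent] using hy₀
          · exact hl.2 u hu
  have hcent₂ : ∀ y₀ : R₂, φ₂ y₀ = 0 → ∀ l : List (R₁ ⊕ R₂), AltW φ₁ φ₂ l →
      ι₂ y₀ * prodE ι₁ ι₂ l ∈ W := by
    intro y₀ hy₀ l hl
    rcases l with _ | ⟨x, t⟩
    · have := hword_mem [Sum.inr y₀] ⟨List.isChain_singleton _, by simp [Cent, hy₀]⟩
      simpa using this
    · rcases x with z | z
      · have hkey : ι₂ y₀ * prodE ι₁ ι₂ (Sum.inl z :: t)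
            = prodE ι₁ ι₂ (Sum.inr y₀ :: Sum.inl z :: t) := by
          simp [prodE_cons]
        rw [hkey]
        refine hword_mem _ ⟨?_, ?_⟩
        · unfold List.Chain'; rw [List.isChain_cons]
          refine ⟨?_, hl.1⟩
          intro b hb
          simp only [List.head?_cons, Option.mem_def, Option.some.injEq] at hb
          subst hb
          simp
        · intro u hu
          rcases List.mem_cons.mp hu with rfl | hu
          · simpa [Cent] using hy₀
          · exact hl.2 u hu
      · set c : ℂ := φ₂ (y₀ * z) with hc
        set z' : R₂ := y₀ * z - c • (1 : R₂) with hz'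
        have hz'c : φ₂ z' = 0 := by
          rw [hz', map_sub, LinearMap.map_smul, hφ₂u]
          simp [hc]
        have ht : AltW φ₁ φ₂ t := AltW_tail _ _ hl
        have hkey : ι₂ y₀ * prodE ι₁ ι₂ (Sum.inr z :: t)
            = c • prodE ι₁ ι₂ t + prodE ι₁ ι₂ (Sum.inr z' :: t) := by
          rw [prodE_cons, prodE_cons, emb_inr, ← mul_assoc, ← map_mul]
          have hzz : (ι₂ z' : R) = ι₂ (y₀ * z) - c • 1 := by
            rw [hz', map_sub, map_smul, map_one]
          have hsplit : (ι₂ (y₀ * z) : R) = c • (1 : R) + ι₂ z' := by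
            rw [hzz]; abel
          rw [hsplit, add_mul, smul_mul_assoc, one_mul]
          rfl
        rw [hkey]
        refine W.add_mem (W.smul_mem _ (hword_mem t ht)) (hword_mem _ ⟨?_, ?_⟩)
        · unfold List.Chain'; rw [List.isChain_cons]
          refine ⟨?_, hl.1.tail⟩
          intro b hb
          have := (List.isChain_cons.mp hl.1).1 b hb
          simpa using this
        · intro u hu
          rcases List.mem_cons.mp hu with rfl | hu
          · simpa [Cent] using hz'c
          · exact hl.2 u (List.mem_cons_of_mem _ hu)
  -- arbitrary generators stabilize W
  have hgen₁ : ∀ (y : R₁) (v : R), v ∈ W → ι₁ y * v ∈ W := by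
    intro y
    let V : Submodule ℂ R :=
      { carrier := {v : R | ι₁ y * v ∈ W}
        add_mem' := fun {a b} ha hb => by
          simp only [Set.mem_setOf_eq, mul_add] at *
          exact W.add_mem ha hb
        zero_mem' := by simp
        smul_mem' := fun c a ha => by
          simp only [Set.mem_setOf_eq, mul_smul_comm] at *
          exact W.smul_mem c ha }
    have hle : W ≤ V := by
      rw [hWdef]
      refine Submodule.span_le.mpr ?_
      rintro v ⟨l, hl, rfl⟩
      show ι₁ y * prodE ι₁ ι₂ l ∈ W
      have hdec : ι₁ y * prodE ι₁ ι₂ l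
          = φ₁ y • prodE ι₁ ι₂ l + ι₁ (y - φ₁ y • 1) * prodE ι₁ ι₂ l := by
        rw [map_sub, map_smul, map_one, sub_mul, smul_mul_assoc, one_mul]
        abel
      rw [hdec]
      refine W.add_mem (W.smul_mem _ (hword_mem l hl)) (hcent₁ _ ?_ l hl)
      rw [map_sub, LinearMap.map_smul, hφ₁u]
      simp
    exact fun v hv => hle hv
  have hgen₂ : ∀ (y : R₂) (v : R), v ∈ W → ι₂ y * v ∈ W := by
    intro y
    let V : Submodule ℂ R :=
      { carrier := {v : R | ι₂ y * v ∈ W}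
        add_mem' := fun {a b} ha hb => by
          simp only [Set.mem_setOf_eq, mul_add] at *
          exact W.add_mem ha hb
        zero_mem' := by simp
        smul_mem' := fun c a ha => by
          simp only [Set.mem_setOf_eq, mul_smul_comm] at *
          exact W.smul_mem c ha }
    have hle : W ≤ V := by
      rw [hWdef]
      refine Submodule.span_le.mpr ?_
      rintro v ⟨l, hl, rfl⟩
      show ι₂ y * prodE ι₁ ι₂ l ∈ W
      have hdec : ι₂ y * prodE ι₁ ι₂ l
          = φ₂ y • prodE ι₁ ι₂ l + ι₂ (y - φ₂ y • 1) * prodE ι₁ ι₂ l := by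
        rw [map_sub, map_smul, map_one, sub_mul, smul_mul_assoc, one_mul]
        abel
      rw [hdec]
      refine W.add_mem (W.smul_mem _ (hword_mem l hl)) (hcent₂ _ ?_ l hl)
      rw [map_sub, LinearMap.map_smul, hφ₂u]
      simp
    exact fun v hv => hle hv
  -- the stabilizer subalgebra
  let S : Subalgebra ℂ R :=
    { carrier := {g : R | ∀ v ∈ W, g * v ∈ W}
      mul_mem' := fun {a b} ha hb v hv => by
        rw [mul_assoc]
        exact ha _ (hb _ hv)
      one_mem' := fun v hv => by rwa [one_mul]
      add_mem' := fun {a b} ha hb v hv => by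
        rw [add_mul]
        exact W.add_mem (ha v hv) (hb v hv)
      algebraMap_mem' := fun c v hv => by
        rw [Algebra.algebraMap_eq_smul_one, smul_mul_assoc, one_mul]
        exact W.smul_mem c hv }
  have hS : Algebra.adjoin ℂ (Set.range ι₁ ∪ Set.range ι₂) ≤ S := by
    refine Algebra.adjoin_le ?_
    rintro g (⟨y, rfl⟩ | ⟨y, rfl⟩)
    · exact hgen₁ y
    · exact hgen₂ y
  have hxS : x ∈ S := by
    rw [hgen] at hS
    exact hS (Algebra.mem_top)
  have := hxS 1 hone
  simpa using this

end

end Stmt17Aux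

theorem stmt17 {R₁ R₂ R : Type*}
    [Ring R₁] [Algebra ℂ R₁] [StarRing R₁] [StarModule ℂ R₁]
    [Ring R₂] [Algebra ℂ R₂] [StarRing R₂] [StarModule ℂ R₂]
    [Ring R] [Algebra ℂ R] [StarRing R] [StarModule ℂ R]
    (φ₁ : R₁ →ₗ[ℂ] ℂ) (φ₂ : R₂ →ₗ[ℂ] ℂ)
    (hφ₁u : φ₁ 1 = 1) (hφ₂u : φ₂ 1 = 1)
    (hφ₁q : ∀ x : R₁, 0 ≤ φ₁ (star x * x))
    (hφ₂q : ∀ x : R₂, 0 ≤ φ₂ (star x * x))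
    (ι₁ : R₁ →⋆ₐ[ℂ] R) (ι₂ : R₂ →⋆ₐ[ℂ] R)
    (hgen : Algebra.adjoin ℂ (Set.range ι₁ ∪ Set.range ι₂) = ⊤)
    (φ : R →ₗ[ℂ] ℂ) (hφu : φ 1 = 1)
    (hres₁ : ∀ x : R₁, φ (ι₁ x) = φ₁ x)
    (hres₂ : ∀ x : R₂, φ (ι₂ x) = φ₂ x)
    (hfree : ∀ (L : List R) (c : List Bool) (hlen : L.length = c.length),
      c.Chain' (· ≠ ·) →
      (∀ i : Fin L.length,
        if c.get (Fin.cast hlen i) then ∃ y : R₁, ι₁ y = L.get i ∧ φ₁ y = 0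
        else ∃ y : R₂, ι₂ y = L.get i ∧ φ₂ y = 0) →
      L ≠ [] → φ L.prod = 0) :
    ∀ x : R, 0 ≤ φ (star x * x) := by
  intro x
  classical
  have hconj₁ := Stmt17Aux.star_apply_conj φ₁ hφ₁u hφ₁q
  have hconj₂ := Stmt17Aux.star_apply_conj φ₂ hφ₂u hφ₂q
  have hx := Stmt17Aux.span_words φ₁ φ₂ ι₁ ι₂ hφ₁u hφ₂u hgen x
  rw [Submodule.mem_span_set'] at hx
  obtain ⟨n, f, g, hg⟩ := hx
  choose l hl hp using fun j => (g j).2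
  have hM := Stmt17Aux.main_psd φ₁ φ₂ ι₁ ι₂ φ hfree hconj₁ hconj₂ hφ₁u hφ₂u hφ₁q hφ₂q hφu
      (Finset.univ.sup fun j => (l j).length) l hl
      (fun j => Finset.le_sup (f := fun j => (l j).length) (Finset.mem_univ j))
  have hquad := hM.dotProduct_mulVec_nonneg f
  rw [Stmt17Aux.quad_eq] at hquad
  have hxe : x = ∑ j, f j • Stmt17Aux.prodE ι₁ ι₂ (l j) := by
    rw [← hg]
    exact (Finset.sum_congr rfl fun j _ => by rw [hp j]).symm
  have expand : φ (star x * x)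
      = ∑ j, ∑ k, starRingEnd ℂ (f j) * f k *
          φ (star (Stmt17Aux.prodE ι₁ ι₂ (l j)) * Stmt17Aux.prodE ι₁ ι₂ (l k)) := by
    rw [hxe, star_sum]
    simp only [star_smul, Complex.star_def]
    rw [Finset.sum_mul_sum, map_sum]
    refine Finset.sum_congr rfl fun j _ => ?_
    rw [map_sum]
    refine Finset.sum_congr rfl fun k _ => ?_
    rw [smul_mul_assoc, mul_smul_comm, LinearMap.map_smul, LinearMap.map_smul]
    simp only [smul_eq_mul]
    ring
  rw [expand]
  simpa using hquad
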